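/- arXiv:2105.00956 — 6 statements merged into one kernel-verified Lean document; each statement's English description precedes it below -/
import Mathlib

section
/- Let H1 = (V1, 𝓔1) and H2 = (V2, 𝓔2) be finite hypergraphs, and let a message-passing UniGNN (same layer functions φ1^t, φ2^t and same constant initial feature c on both hypergraphs) compute features h^t. Let T ≥ 0 and suppose that the multisets of 1-GWL labels agree at every iteration t ∈ {0, …, T}, i.e. {{ l^t_{H1,i} : i ∈ V1 }} = {{ l^t_{H2,i} : i ∈ V2 }}, and that the multisets of UniGNN features agree at every iteration t ∈ {0, …, T−1}, i.e. {{ h^t_{H1,i} : i ∈ V1 }} = {{ h^t_{H2,i} : i ∈ V2 }}. Then for every t ∈ {0, …, T} and all vertices i1 ∈ V1, i2 ∈ V2, the implication l^t_{H1,i1} = l^t_{H2,i2} ⟹ h^t_{H1,i1} = h^t_{H2,i2} holds. -/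
/-- A finite hypergraph on a vertex type `V`: a finite set of nonempty
finite hyperedges. -/
structure FinHypergraph (V : Type) [DecidableEq V] where
  edges : Finset (Finset V)
  edges_nonempty : ∀ e ∈ edges, e.Nonempty

namespace FinHypergraph

variable {V : Type} [DecidableEq V]

/-- The incident hyperedges `E_i` of a vertex `i`. -/
def incident (H : FinHypergraph V) (i : V) : Finset (Finset V) :=
  H.edges.filter (fun e => i ∈ e)

end FinHypergraph

/-- The type of 1-GWL labels at iteration `t`. -/
def LabelType : ℕ → Type
  | 0 => ℕ
  | t + 1 => Multiset (LabelType t × Multiset (LabelType t))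

/-- The 1-GWL vertex label `l^t_{H,i}`: all vertices start with label `0`, and
`l^{t+1}_i = {{ (l^t_i, l^t_e) : e ∈ E_i }}` where `l^t_e = {{ l^t_j : j ∈ e }}`. -/
def gwlLabel {V : Type} [DecidableEq V] (H : FinHypergraph V) : (t : ℕ) → V → LabelType t
  | 0, _ => (0 : ℕ)
  | t + 1, i =>
      ((H.incident i).val.map fun e => (gwlLabel H t i, e.val.map (gwlLabel H t)))

/-- The 1-GWL hyperedge label `l^t_e = {{ l^t_j : j ∈ e }}`. -/
def gwlEdgeLabel {V : Type} [DecidableEq V] (H : FinHypergraph V) (t : ℕ) (e : Finset V) :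
    Multiset (LabelType t) :=
  e.val.map (gwlLabel H t)

/-- The multiset of 1-GWL labels of all vertices, `{{ l^t_{H,i} : i ∈ V }}`. -/
def gwlMultiset {V : Type} [DecidableEq V] [Fintype V] (H : FinHypergraph V) (t : ℕ) :
    Multiset (LabelType t) :=
  (Finset.univ : Finset V).val.map (gwlLabel H t)

/-- The UniGNN feature `h^t_{H,i}` computed by two-stage message passing with
first-stage aggregations `φ1`, second-stage aggregations `φ2` and constant initial
feature `c`:  `h^{t+1}_i = φ2 t (h^t_i) {{ φ1 t {{ h^t_j : j ∈ e }} : e ∈ E_i }}`. -/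
def uniFeat {V : Type} [DecidableEq V] {X : Type}
    (φ1 : ℕ → Multiset X → X) (φ2 : ℕ → X → Multiset X → X) (c : X)
    (H : FinHypergraph V) : (t : ℕ) → V → X
  | 0, _ => c
  | t + 1, i =>
      φ2 t (uniFeat φ1 φ2 c H t i)
        ((H.incident i).val.map fun e => φ1 t (e.val.map (uniFeat φ1 φ2 c H t)))

/-- The multiset of UniGNN features of all vertices, `{{ h^t_{H,i} : i ∈ V }}`. -/
def uniFeatMultiset {V : Type} [DecidableEq V] [Fintype V] {X : Type}
    (φ1 : ℕ → Multiset X → X) (φ2 : ℕ → X → Multiset X → X) (c : X)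
    (H : FinHypergraph V) (t : ℕ) : Multiset X :=
  (Finset.univ : Finset V).val.map (uniFeat φ1 φ2 c H t)

/-- `f` is an isomorphism between hypergraphs `H1` and `H2`. -/
def IsHypergraphIso {V1 V2 : Type} [DecidableEq V1] [DecidableEq V2]
    (H1 : FinHypergraph V1) (H2 : FinHypergraph V2) (f : V1 ≃ V2) : Prop :=
  ∀ e : Finset V1, e ∈ H1.edges ↔ e.image f ∈ H2.edges

/-- **Lemma.** If the multisets of 1-GWL labels of `H1` and `H2` agree for all
`t ∈ {0,…,T}` and the multisets of UniGNN features agree for all `t ∈ {0,…,T-1}`,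
then for every `t ∈ {0,…,T}` equal 1-GWL labels of two vertices imply equal
UniGNN features. -/
theorem uniFeat_eq_of_gwlLabel_eq
    {X : Type} (φ1 : ℕ → Multiset X → X) (φ2 : ℕ → X → Multiset X → X) (c : X)
    {V1 V2 : Type} [DecidableEq V1] [Fintype V1] [DecidableEq V2] [Fintype V2]
    (H1 : FinHypergraph V1) (H2 : FinHypergraph V2) (T : ℕ)
    (hl : ∀ t ≤ T, gwlMultiset H1 t = gwlMultiset H2 t)
    (hh : ∀ t < T, uniFeatMultiset φ1 φ2 c H1 t = uniFeatMultiset φ1 φ2 c H2 t) :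
    ∀ t ≤ T, ∀ (i1 : V1) (i2 : V2),
      gwlLabel H1 t i1 = gwlLabel H2 t i2 →
        uniFeat φ1 φ2 c H1 t i1 = uniFeat φ1 φ2 c H2 t i2 := by
  classical
  intro t
  induction t with
  | zero => intro _ i1 i2 _; rfl
  | succ t ih =>
    intro hT i1 i2 hlab
    have htT : t ≤ T := Nat.le_of_succ_le hT
    have ih' := ih htT
    -- membership facts
    have mem1 : ∀ j1 : V1, gwlLabel H1 t j1 ∈ gwlMultiset H2 t := by
      intro j1
      rw [← hl t htT]
      exact Multiset.mem_map_of_mem _ (Finset.mem_def.mp (Finset.mem_univ j1))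
    have mem2 : ∀ j2 : V2, gwlLabel H2 t j2 ∈ gwlMultiset H1 t := by
      intro j2
      rw [hl t htT]
      exact Multiset.mem_map_of_mem _ (Finset.mem_def.mp (Finset.mem_univ j2))
    -- within-H1 implication
    have ih1 : ∀ j1 j1' : V1, gwlLabel H1 t j1 = gwlLabel H1 t j1' →
        uniFeat φ1 φ2 c H1 t j1 = uniFeat φ1 φ2 c H1 t j1' := by
      intro j1 j1' hj
      obtain ⟨j2, _, hj2⟩ := Multiset.mem_map.1 (mem1 j1)
      rw [ih' j1 j2 hj2.symm, ih' j1' j2 (hj ▸ hj2.symm)]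
    -- construct a common function F with F ∘ l = h on both graphs
    obtain ⟨F, hF1, hF2⟩ : ∃ F : LabelType t → X,
        (∀ j1, F (gwlLabel H1 t j1) = uniFeat φ1 φ2 c H1 t j1) ∧
        (∀ j2, F (gwlLabel H2 t j2) = uniFeat φ1 φ2 c H2 t j2) := by
      refine ⟨fun ℓ => if h : ∃ j1, gwlLabel H1 t j1 = ℓ
        then uniFeat φ1 φ2 c H1 t h.choose else c, ?_, ?_⟩
      · intro j1
        have h : ∃ j1', gwlLabel H1 t j1' = gwlLabel H1 t j1 := ⟨j1, rfl⟩
        simp only [dif_pos h]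
        exact ih1 h.choose j1 h.choose_spec
      · intro j2
        obtain ⟨j1, _, hj1⟩ := Multiset.mem_map.1 (mem2 j2)
        have h : ∃ j1', gwlLabel H1 t j1' = gwlLabel H2 t j2 := ⟨j1, hj1⟩
        simp only [dif_pos h]
        exact ih' h.choose j2 h.choose_spec
    -- unfold the labels at t+1
    have hlab' : ((H1.incident i1).val.map
          fun e => (gwlLabel H1 t i1, e.val.map (gwlLabel H1 t)))
        = ((H2.incident i2).val.map
          fun e => (gwlLabel H2 t i2, e.val.map (gwlLabel H2 t))) := hlab
    by_cases hemp : H1.incident i1 = ∅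
    · -- both have no incident edges
      have hval1 : (H1.incident i1).val = 0 := by rw [hemp]; rfl
      have hval2 : (H2.incident i2).val = 0 := by
        have := hlab'
        rw [hval1] at this
        simpa [Multiset.map_eq_zero] using this.symm
      have hlt : gwlLabel H1 t i1 = gwlLabel H2 t i2 := by
        cases t with
        | zero => rfl
        | succ s =>
          show ((H1.incident i1).val.map _) = ((H2.incident i2).val.map _)
          have hv1 : (H1.incident i1).val = 0 := hval1
          have hv2 : (H2.incident i2).val = 0 := hval2
          rw [hv1, hv2]
          simp
      have hft := ih' i1 i2 hlt
      show φ2 t _ _ = φ2 t _ _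
      rw [hft, hval1, hval2]
      simp
    · -- the incident multisets are nonempty; extract first components
      obtain ⟨e1, he1⟩ := Finset.nonempty_iff_ne_empty.2 hemp
      have hpair : (gwlLabel H1 t i1, e1.val.map (gwlLabel H1 t)) ∈
          ((H2.incident i2).val.map
            fun e => (gwlLabel H2 t i2, e.val.map (gwlLabel H2 t))) := by
        rw [← hlab']
        exact Multiset.mem_map_of_mem _ (Finset.mem_def.mp he1)
      obtain ⟨e2, _, he2⟩ := Multiset.mem_map.1 hpair
      have hlt : gwlLabel H1 t i1 = gwlLabel H2 t i2 := (Prod.mk.injEq _ _ _ _ ▸ he2).1.symm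
      have hft := ih' i1 i2 hlt
      -- second components: edge-label multisets agree
      have hsnd : ((H1.incident i1).val.map fun e => e.val.map (gwlLabel H1 t))
          = ((H2.incident i2).val.map fun e => e.val.map (gwlLabel H2 t)) := by
        have := congrArg (Multiset.map Prod.snd) hlab'
        simpa [Multiset.map_map, Function.comp] using this
      -- the aggregated messages agree
      have hmsg : ((H1.incident i1).val.map
            fun e => φ1 t (e.val.map (uniFeat φ1 φ2 c H1 t)))
          = ((H2.incident i2).val.map
            fun e => φ1 t (e.val.map (uniFeat φ1 φ2 c H2 t))) := by
        have key1 : ∀ e : Finset V1,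
            e.val.map (uniFeat φ1 φ2 c H1 t) = (e.val.map (gwlLabel H1 t)).map F := by
          intro e
          rw [Multiset.map_map]
          exact Multiset.map_congr rfl fun j _ => (hF1 j).symm
        have key2 : ∀ e : Finset V2,
            e.val.map (uniFeat φ1 φ2 c H2 t) = (e.val.map (gwlLabel H2 t)).map F := by
          intro e
          rw [Multiset.map_map]
          exact Multiset.map_congr rfl fun j _ => (hF2 j).symm
        calc ((H1.incident i1).val.map fun e => φ1 t (e.val.map (uniFeat φ1 φ2 c H1 t)))
            = ((H1.incident i1).val.map fun e => e.val.map (gwlLabel H1 t)).map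
                (fun m => φ1 t (m.map F)) := by
              rw [Multiset.map_map]
              exact Multiset.map_congr rfl fun e _ => by rw [key1]; rfl
          _ = ((H2.incident i2).val.map fun e => e.val.map (gwlLabel H2 t)).map
                (fun m => φ1 t (m.map F)) := by rw [hsnd]
          _ = _ := by
              rw [Multiset.map_map]
              exact Multiset.map_congr rfl fun e _ => by rw [key2]; rfl
      show φ2 t _ _ = φ2 t _ _
      rw [hft, hmsg]
end

section
/- (Proposition 2) Let H1 = (V1, 𝓔1) and H2 = (V2, 𝓔2) be finite hypergraphs, and let a message-passing UniGNN (same layer functions φ1^t, φ2^t and same constant initial feature c on both hypergraphs) compute features h^t. If there exists an iteration T ≥ 0 such that the multisets of UniGNN features differ, i.e. {{ h^T_{H1,i} : i ∈ V1 }} ≠ {{ h^T_{H2,i} : i ∈ V2 }}, then the multisets of 1-GWL labels also differ at iteration T, i.e. {{ l^T_{H1,i} : i ∈ V1 }} ≠ {{ l^T_{H2,i} : i ∈ V2 }}. In other words, the discriminative power of any message-passing UniGNN is upper bounded by the 1-GWL test. -/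
/-- Default label, used only as a junk value. -/
def defaultLabel : (t : ℕ) → LabelType t
  | 0 => (0 : ℕ)
  | _ + 1 => (0 : Multiset _)

/-- Feature of an isolated vertex at iteration `t`. -/
def isoFeat {X : Type} (φ2 : ℕ → X → Multiset X → X) (c : X) : ℕ → X
  | 0 => c
  | t + 1 => φ2 t (isoFeat φ2 c t) 0

/-- Decoder from 1-GWL labels to UniGNN features. -/
noncomputable def decode {X : Type} (φ1 : ℕ → Multiset X → X)
    (φ2 : ℕ → X → Multiset X → X) (c : X) : (t : ℕ) → LabelType t → X
  | 0, _ => c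
  | t + 1, m =>
      if (m : Multiset (LabelType t × Multiset (LabelType t))).card = 0 then
        φ2 t (isoFeat φ2 c t) 0
      else
        φ2 t (decode φ1 φ2 c t
            (((m : Multiset (LabelType t × Multiset (LabelType t))).toList.head?.getD
              (defaultLabel t, 0)).1))
          ((m : Multiset (LabelType t × Multiset (LabelType t))).map
            fun p => φ1 t (p.2.map (decode φ1 φ2 c t)))

lemma isoFeat_eq {X : Type} (φ1 : ℕ → Multiset X → X) (φ2 : ℕ → X → Multiset X → X)
    (c : X) {V : Type} [DecidableEq V] (H : FinHypergraph V) (i : V)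
    (h : H.incident i = ∅) : ∀ t, uniFeat φ1 φ2 c H t i = isoFeat φ2 c t := by
  intro t
  induction t with
  | zero => rfl
  | succ t ih =>
      simp [uniFeat, isoFeat, ih, h]

lemma decode_gwl {X : Type} (φ1 : ℕ → Multiset X → X) (φ2 : ℕ → X → Multiset X → X)
    (c : X) {V : Type} [DecidableEq V] (H : FinHypergraph V) :
    ∀ (t : ℕ) (i : V), decode φ1 φ2 c t (gwlLabel H t i) = uniFeat φ1 φ2 c H t i := by
  intro t
  induction t with
  | zero => intro i; rfl
  | succ t ih =>
      intro i
      set m : Multiset (LabelType t × Multiset (LabelType t)) :=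
          (H.incident i).val.map (fun e => (gwlLabel H t i, e.val.map (gwlLabel H t)))
          with hm
      have hdec : decode φ1 φ2 c (t + 1) (gwlLabel H (t + 1) i) =
          (if m.card = 0 then φ2 t (isoFeat φ2 c t) 0
           else φ2 t (decode φ1 φ2 c t ((m.toList.head?.getD (defaultLabel t, 0)).1))
             (m.map fun p => φ1 t (p.2.map (decode φ1 φ2 c t)))) := rfl
      rw [hdec]
      by_cases hnil : m.card = 0
      · have hinc : H.incident i = ∅ := by
          simp only [hm, Multiset.card_map] at hnil
          exact Finset.card_eq_zero.mp hnil
        rw [if_pos hnil, uniFeat, isoFeat_eq φ1 φ2 c H i hinc t, hinc]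
        rfl
      · rw [if_neg hnil]
        have hne : m.toList ≠ [] := by
          intro h0
          apply hnil
          rw [← Multiset.length_toList, h0]
          rfl
        have hfst : ∀ p ∈ m, p.1 = gwlLabel H t i := by
          intro p hp
          simp only [hm, Multiset.mem_map] at hp
          obtain ⟨e, _, he⟩ := hp
          rw [← he]
        obtain ⟨q, l, hql⟩ := List.exists_cons_of_ne_nil hne
        have hq : q ∈ m := by
          rw [← Multiset.mem_toList, hql]; exact List.mem_cons_self
        have hhead : m.toList.head?.getD (defaultLabel t, 0) = q := by
          rw [hql]; rfl
        rw [hhead, hfst q hq, ih i, uniFeat]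
        congr 1
        rw [hm]
        simp only [Multiset.map_map, Function.comp]
        apply Multiset.map_congr rfl
        intro e _
        congr 1
        exact Multiset.map_congr rfl fun j _ => ih j

/-- **Proposition 2.** If a message-passing UniGNN distinguishes two finite hypergraphs
at some iteration `T` (the multisets of features differ), then the 1-GWL test also
distinguishes them at iteration `T` (the multisets of labels differ): the discriminative
power of any message-passing UniGNN is upper bounded by the 1-GWL test. -/

theorem gwl_distinguishes_of_uniGNN_distinguishes
    {X : Type} (φ1 : ℕ → Multiset X → X) (φ2 : ℕ → X → Multiset X → X) (c : X)
    {V1 V2 : Type} [DecidableEq V1] [Fintype V1] [DecidableEq V2] [Fintype V2]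
    (H1 : FinHypergraph V1) (H2 : FinHypergraph V2) (T : ℕ)
    (hA : uniFeatMultiset φ1 φ2 c H1 T ≠ uniFeatMultiset φ1 φ2 c H2 T) :
    gwlMultiset H1 T ≠ gwlMultiset H2 T := by
  intro h
  apply hA
  have e1 : uniFeatMultiset φ1 φ2 c H1 T = (gwlMultiset H1 T).map (decode φ1 φ2 c T) := by
    unfold uniFeatMultiset gwlMultiset
    rw [Multiset.map_map]
    exact Multiset.map_congr rfl fun i _ => (decode_gwl φ1 φ2 c H1 T i).symm
  have e2 : uniFeatMultiset φ1 φ2 c H2 T = (gwlMultiset H2 T).map (decode φ1 φ2 c T) := by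
    unfold uniFeatMultiset gwlMultiset
    rw [Multiset.map_map]
    exact Multiset.map_congr rfl fun i _ => (decode_gwl φ1 φ2 c H2 T i).symm
  rw [e1, e2, h]
end

section
/- Let a message-passing UniGNN have, for every layer t, injective first-stage aggregation φ1^t (injective as a function on finite multisets over X) and injective second-stage aggregation φ2^t (injective as a function on pairs of an element of X and a finite multiset over X). Then for every iteration t ≥ 0, the 1-GWL label determines the UniGNN feature injectively: for all finite hypergraphs H1, H2 and all vertices i1 ∈ V1, i2 ∈ V2, one has l^t_{H1,i1} = l^t_{H2,i2} if and only if h^t_{H1,i1} = h^t_{H2,i2}. Equivalently, for each t there exists an injective map M^t with M^t(l^t_{H,i}) = h^t_{H,i} for every finite hypergraph H and vertex i. -/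

private lemma relIffOfIff {α β : Type*} {r r' : α → β → Prop}
    (h : ∀ a b, r a b ↔ r' a b) {s : Multiset α} {t : Multiset β} :
    Multiset.Rel r s t ↔ Multiset.Rel r' s t :=
  ⟨fun H => H.mono fun a _ b _ hab => (h a b).1 hab,
   fun H => H.mono fun a _ b _ hab => (h a b).2 hab⟩

private lemma mapEqMapIffRel {α β γ : Type*} (f : α → γ) (g : β → γ)
    {s : Multiset α} {t : Multiset β} :
    s.map f = t.map g ↔ Multiset.Rel (fun a b => f a = g b) s t := by
  rw [← Multiset.rel_eq, Multiset.rel_map]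

private lemma gwlLabel_isolated {V1 V2 : Type} [DecidableEq V1] [DecidableEq V2]
    (H1 : FinHypergraph V1) (H2 : FinHypergraph V2) {i1 : V1} {i2 : V2}
    (h1 : H1.incident i1 = ∅) (h2 : H2.incident i2 = ∅) :
    ∀ t, gwlLabel H1 t i1 = gwlLabel H2 t i2
  | 0 => rfl
  | t + 1 => by simp [gwlLabel, h1, h2]; rfl

private theorem gwl_aux
    {X : Type} (φ1 : ℕ → Multiset X → X) (φ2 : ℕ → X → Multiset X → X) (c : X)
    (hφ1 : ∀ t, Function.Injective (φ1 t))
    (hφ2 : ∀ t, Function.Injective (fun p : X × Multiset X => φ2 t p.1 p.2)) :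
    ∀ (t : ℕ) {V1 V2 : Type} [DecidableEq V1] [DecidableEq V2]
      (H1 : FinHypergraph V1) (H2 : FinHypergraph V2) (i1 : V1) (i2 : V2),
      gwlLabel H1 t i1 = gwlLabel H2 t i2 ↔
        uniFeat φ1 φ2 c H1 t i1 = uniFeat φ1 φ2 c H2 t i2 := by
  intro t
  induction t with
  | zero =>
    intro V1 V2 _ _ H1 H2 i1 i2
    simp [gwlLabel, uniFeat]; rfl
  | succ t ih =>
    intro V1 V2 _ _ H1 H2 i1 i2
    set s1 := (H1.incident i1).val with hs1
    set s2 := (H2.incident i2).val with hs2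
    -- edge-level equivalence
    have hedge : ∀ (e1 : Finset V1) (e2 : Finset V2),
        e1.val.map (gwlLabel H1 t) = e2.val.map (gwlLabel H2 t) ↔
        e1.val.map (uniFeat φ1 φ2 c H1 t) = e2.val.map (uniFeat φ1 φ2 c H2 t) := by
      intro e1 e2
      rw [mapEqMapIffRel, mapEqMapIffRel]
      exact relIffOfIff (fun a b => ih H1 H2 a b)
    -- RHS rewriting
    have hRHS : (uniFeat φ1 φ2 c H1 (t+1) i1 = uniFeat φ1 φ2 c H2 (t+1) i2) ↔
        (gwlLabel H1 t i1 = gwlLabel H2 t i2 ∧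
          Multiset.Rel (fun (e1 : Finset V1) (e2 : Finset V2) =>
            e1.val.map (gwlLabel H1 t) = e2.val.map (gwlLabel H2 t)) s1 s2) := by
      show φ2 t _ _ = φ2 t _ _ ↔ _
      rw [show ∀ (a b : X) (m1 m2 : Multiset X),
            (φ2 t a m1 = φ2 t b m2) ↔ ((a, m1) = (b, m2)) from
          fun a b m1 m2 => (hφ2 t).eq_iff (a := (a, m1)) (b := (b, m2)),
        Prod.mk.injEq]
      constructor
      · rintro ⟨h, hm⟩
        refine ⟨(ih H1 H2 i1 i2).2 h, ?_⟩
        rw [show (fun e : Finset V1 => φ1 t (e.val.map (uniFeat φ1 φ2 c H1 t))) =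
              (φ1 t) ∘ (fun e : Finset V1 => e.val.map (uniFeat φ1 φ2 c H1 t)) from rfl,
          show (fun e : Finset V2 => φ1 t (e.val.map (uniFeat φ1 φ2 c H2 t))) =
              (φ1 t) ∘ (fun e : Finset V2 => e.val.map (uniFeat φ1 φ2 c H2 t)) from rfl,
          ← Multiset.map_map, ← Multiset.map_map] at hm
        have hm' := Multiset.map_injective (hφ1 t) hm
        rw [mapEqMapIffRel] at hm'
        exact hm'.mono fun a _ b _ hab => (hedge a b).2 hab
      · rintro ⟨h, hrel⟩
        refine ⟨(ih H1 H2 i1 i2).1 h, ?_⟩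
        have hrel' : Multiset.Rel (fun (e1 : Finset V1) (e2 : Finset V2) =>
            e1.val.map (uniFeat φ1 φ2 c H1 t) = e2.val.map (uniFeat φ1 φ2 c H2 t)) s1 s2 :=
          hrel.mono fun a _ b _ hab => (hedge a b).1 hab
        have := (mapEqMapIffRel (fun e : Finset V1 => e.val.map (uniFeat φ1 φ2 c H1 t))
          (fun e : Finset V2 => e.val.map (uniFeat φ1 φ2 c H2 t))).2 hrel'
        calc s1.map (fun e => φ1 t (e.val.map (uniFeat φ1 φ2 c H1 t)))
            = (s1.map (fun e : Finset V1 => e.val.map (uniFeat φ1 φ2 c H1 t))).map (φ1 t) := by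
              rw [Multiset.map_map]; rfl
          _ = (s2.map (fun e : Finset V2 => e.val.map (uniFeat φ1 φ2 c H2 t))).map (φ1 t) := by
              rw [this]
          _ = s2.map (fun e => φ1 t (e.val.map (uniFeat φ1 φ2 c H2 t))) := by
              rw [Multiset.map_map]; rfl
    -- LHS rewriting
    have hLHS : (gwlLabel H1 (t+1) i1 = gwlLabel H2 (t+1) i2) ↔
        Multiset.Rel (fun (e1 : Finset V1) (e2 : Finset V2) =>
          gwlLabel H1 t i1 = gwlLabel H2 t i2 ∧
          e1.val.map (gwlLabel H1 t) = e2.val.map (gwlLabel H2 t)) s1 s2 := by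
      show s1.map _ = s2.map _ ↔ _
      rw [mapEqMapIffRel]
      exact relIffOfIff (fun a b => by rw [Prod.mk.injEq])
    rw [hRHS, hLHS]
    constructor
    · intro h
      have hrel : Multiset.Rel (fun (e1 : Finset V1) (e2 : Finset V2) =>
          e1.val.map (gwlLabel H1 t) = e2.val.map (gwlLabel H2 t)) s1 s2 :=
        h.mono fun a _ b _ hab => hab.2
      refine ⟨?_, hrel⟩
      rcases Multiset.empty_or_exists_mem s1 with h0 | ⟨a, ha⟩
      · have h2 : s2 = 0 := by
          rw [h0] at hrel; exact Multiset.rel_zero_left.mp hrel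
        exact gwlLabel_isolated H1 H2 (Finset.val_eq_zero.mp h0)
          (Finset.val_eq_zero.mp h2) t
      · obtain ⟨b, _, hab⟩ := Multiset.exists_mem_of_rel_of_mem h ha
        exact hab.1
    · rintro ⟨hL, hrel⟩
      exact hrel.mono fun a _ b _ hab => ⟨hL, hab⟩

/-- If all first-stage aggregations `φ1^t` and all second-stage aggregations `φ2^t`
of a message-passing UniGNN are injective, then at every iteration `t` the 1-GWL
label determines the UniGNN feature injectively: two vertices (of any two finite
hypergraphs) have the same 1-GWL label iff they have the same UniGNN feature. -/
theorem gwlLabel_eq_iff_uniFeat_eq_of_injective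
    {X : Type} (φ1 : ℕ → Multiset X → X) (φ2 : ℕ → X → Multiset X → X) (c : X)
    (hφ1 : ∀ t, Function.Injective (φ1 t))
    (hφ2 : ∀ t, Function.Injective (fun p : X × Multiset X => φ2 t p.1 p.2))
    {V1 V2 : Type} [DecidableEq V1] [Fintype V1] [DecidableEq V2] [Fintype V2]
    (H1 : FinHypergraph V1) (H2 : FinHypergraph V2) (t : ℕ) (i1 : V1) (i2 : V2) :
    gwlLabel H1 t i1 = gwlLabel H2 t i2 ↔
      uniFeat φ1 φ2 c H1 t i1 = uniFeat φ1 φ2 c H2 t i2 :=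
  gwl_aux φ1 φ2 c hφ1 hφ2 t H1 H2 i1 i2
end

section
/- (Theorem 1, local level) Let H1 = (V1, 𝓔1) and H2 = (V2, 𝓔2) be finite hypergraphs and let a message-passing UniGNN have, for every layer t, injective first-stage aggregation φ1^t (injective on finite multisets over X) and injective second-stage aggregation φ2^t (injective on pairs of an element of X and a finite multiset over X). If the 1-GWL test distinguishes H1 and H2 at some iteration T, i.e. {{ l^T_{H1,i} : i ∈ V1 }} ≠ {{ l^T_{H2,i} : i ∈ V2 }}, then the multisets of UniGNN features at iteration T also differ: {{ h^T_{H1,i} : i ∈ V1 }} ≠ {{ h^T_{H2,i} : i ∈ V2 }}. -/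
lemma map_eq_map_iff_rel {α β γ : Type*} {s : Multiset α} {t : Multiset β}
    {f : α → γ} {g : β → γ} :
    s.map f = t.map g ↔ Multiset.Rel (fun a b => f a = g b) s t := by
  rw [← Multiset.rel_eq, Multiset.rel_map]

lemma feat_eq_imp_label_eq
    {X : Type} (φ1 : ℕ → Multiset X → X) (φ2 : ℕ → X → Multiset X → X) (c : X)
    (hφ1 : ∀ t, Function.Injective (φ1 t))
    (hφ2 : ∀ t, Function.Injective (fun p : X × Multiset X => φ2 t p.1 p.2)) :
    ∀ (t : ℕ) {V1 V2 : Type} [DecidableEq V1] [DecidableEq V2]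
      (H1 : FinHypergraph V1) (H2 : FinHypergraph V2) (i : V1) (j : V2),
      uniFeat φ1 φ2 c H1 t i = uniFeat φ1 φ2 c H2 t j →
      gwlLabel H1 t i = gwlLabel H2 t j := by
  intro t
  induction t with
  | zero => intro V1 V2 _ _ H1 H2 i j _; rfl
  | succ t ih =>
      intro V1 V2 _ _ H1 H2 i j h
      simp only [uniFeat] at h
      have hpair := hφ2 t (a₁ := (uniFeat φ1 φ2 c H1 t i,
          (H1.incident i).val.map fun e => φ1 t (e.val.map (uniFeat φ1 φ2 c H1 t))))
        (a₂ := (uniFeat φ1 φ2 c H2 t j,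
          (H2.incident j).val.map fun e => φ1 t (e.val.map (uniFeat φ1 φ2 c H2 t)))) h
      have h1 : uniFeat φ1 φ2 c H1 t i = uniFeat φ1 φ2 c H2 t j :=
        congrArg Prod.fst hpair
      have h2 := congrArg Prod.snd hpair
      simp only at h2
      have hli := ih H1 H2 i j h1
      have hrel := map_eq_map_iff_rel.mp h2
      show ((H1.incident i).val.map fun e => (gwlLabel H1 t i, e.val.map (gwlLabel H1 t)))
        = ((H2.incident j).val.map fun e => (gwlLabel H2 t j, e.val.map (gwlLabel H2 t)))
      rw [map_eq_map_iff_rel]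
      refine hrel.mono ?_
      intro e _ e' _ he
      have hmaps : e.val.map (uniFeat φ1 φ2 c H1 t)
          = e'.val.map (uniFeat φ1 φ2 c H2 t) := hφ1 t he
      have : e.val.map (gwlLabel H1 t) = e'.val.map (gwlLabel H2 t) := by
        rw [map_eq_map_iff_rel]
        exact (map_eq_map_iff_rel.mp hmaps).mono
          (fun a _ b _ hab => ih H1 H2 a b hab)
      rw [hli, this]

/-- **Theorem 1 (local level).** If all first-stage aggregations `φ1^t` and all
second-stage aggregations `φ2^t` of a message-passing UniGNN are injective, and the
1-GWL test distinguishes two finite hypergraphs at iteration `T` (the multisets of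
labels differ), then the multisets of UniGNN features at iteration `T` also differ. -/
theorem uniGNN_distinguishes_of_gwl_distinguishes
    {X : Type} (φ1 : ℕ → Multiset X → X) (φ2 : ℕ → X → Multiset X → X) (c : X)
    (hφ1 : ∀ t, Function.Injective (φ1 t))
    (hφ2 : ∀ t, Function.Injective (fun p : X × Multiset X => φ2 t p.1 p.2))
    {V1 V2 : Type} [DecidableEq V1] [Fintype V1] [DecidableEq V2] [Fintype V2]
    (H1 : FinHypergraph V1) (H2 : FinHypergraph V2) (T : ℕ)
    (hgwl : gwlMultiset H1 T ≠ gwlMultiset H2 T) :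
    uniFeatMultiset φ1 φ2 c H1 T ≠ uniFeatMultiset φ1 φ2 c H2 T := by
  intro hfeat
  apply hgwl
  unfold gwlMultiset
  rw [map_eq_map_iff_rel]
  exact (map_eq_map_iff_rel.mp hfeat).mono
    (fun i _ j _ hij => feat_eq_imp_label_eq φ1 φ2 c hφ1 hφ2 T H1 H2 i j hij)
end

section
/- (Theorem 1, global level) Let H1 = (V1, 𝓔1) and H2 = (V2, 𝓔2) be finite hypergraphs, let a message-passing UniGNN have injective first-stage aggregations φ1^t and injective second-stage aggregations φ2^t for every layer t, and let the graph-level output be A(H) = READOUT( {{ h^T_{H,i} : i ∈ V }} ) for an injective function READOUT on finite multisets over X. If the 1-GWL test distinguishes H1 and H2 at iteration T, i.e. {{ l^T_{H1,i} : i ∈ V1 }} ≠ {{ l^T_{H2,i} : i ∈ V2 }}, then A(H1) ≠ A(H2). -/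
section Aux

/-- Pairing lemma: if two mapped multisets agree and the pairing condition holds,
the other maps agree too. -/
lemma map_eq_map_of_rel {α β γ δ : Type*} (f : α → γ) (f' : β → γ) (g : α → δ) (g' : β → δ) :
    ∀ (s : Multiset α) (s' : Multiset β), s.map f = s'.map f' →
    (∀ a ∈ s, ∀ b ∈ s', f a = f' b → g a = g' b) → s.map g = s'.map g' := by
  classical
  intro s
  induction s using Multiset.induction with
  | empty =>
      intro s' h _
      simp only [Multiset.map_zero] at h ⊢
      rw [eq_comm, Multiset.map_eq_zero] at h
      simp [h]
  | cons a s ih =>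
      intro s' h hcond
      have hmem : f a ∈ s'.map f' := by
        rw [← h]; exact Multiset.mem_map_of_mem f (Multiset.mem_cons_self a s)
      obtain ⟨b, hb, hfb⟩ := Multiset.mem_map.mp hmem
      have hs' : s' = b ::ₘ s'.erase b := (Multiset.cons_erase hb).symm
      rw [hs'] at h
      rw [Multiset.map_cons, Multiset.map_cons, hfb] at h
      have htail : s.map f = (s'.erase b).map f' := by
        exact (Multiset.cons_inj_right _).mp h
      have hgt : s.map g = (s'.erase b).map g' := by
        refine ih _ htail ?_
        intro a' ha' b' hb' hfe
        exact hcond a' (Multiset.mem_cons_of_mem ha') b'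
          (by rw [hs']; exact Multiset.mem_cons_of_mem hb') hfe
      rw [hs', Multiset.map_cons, Multiset.map_cons, hgt,
        hcond a (Multiset.mem_cons_self a s) b hb hfb.symm]

end Aux

/-- **Theorem 1 (global level).** If all first-stage aggregations `φ1^t` and all
second-stage aggregations `φ2^t` of a message-passing UniGNN are injective, the
graph-level output is `A(H) = READOUT {{ h^T_{H,i} : i ∈ V }}` with `READOUT`
injective, and the 1-GWL test distinguishes two finite hypergraphs at iteration `T`,
then `A(H1) ≠ A(H2)`. -/
theorem uniGNN_readout_distinguishes_of_gwl_distinguishes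
    {X Y : Type} (φ1 : ℕ → Multiset X → X) (φ2 : ℕ → X → Multiset X → X) (c : X)
    (READOUT : Multiset X → Y)
    (hφ1 : ∀ t, Function.Injective (φ1 t))
    (hφ2 : ∀ t, Function.Injective (fun p : X × Multiset X => φ2 t p.1 p.2))
    (hR : Function.Injective READOUT)
    {V1 V2 : Type} [DecidableEq V1] [Fintype V1] [DecidableEq V2] [Fintype V2]
    (H1 : FinHypergraph V1) (H2 : FinHypergraph V2) (T : ℕ)
    (hgwl : gwlMultiset H1 T ≠ gwlMultiset H2 T) :
    READOUT (uniFeatMultiset φ1 φ2 c H1 T) ≠ READOUT (uniFeatMultiset φ1 φ2 c H2 T) := by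
  intro hEq
  apply hgwl
  have hfm : uniFeatMultiset φ1 φ2 c H1 T = uniFeatMultiset φ1 φ2 c H2 T := hR hEq
  unfold gwlMultiset
  unfold uniFeatMultiset at hfm
  exact map_eq_map_of_rel _ _ _ _ _ _ hfm
    (fun a _ b _ hab => feat_eq_imp_label_eq φ1 φ2 c hφ1 hφ2 T H1 H2 a b hab)
end

section
/- (Corollary 1, vertex-level version) Let a message-passing UniGNN have, for every layer t, injective first-stage aggregation φ1^t and injective second-stage aggregation φ2^t. If for two finite hypergraphs H1, H2 and vertices i1 ∈ V1, i2 ∈ V2 the 1-GWL test distinguishes the local substructures rooted at i1 and i2 at depth t — that is, l^t_{H1,i1} ≠ l^t_{H2,i2} — then the UniGNN also distinguishes them: h^t_{H1,i1} ≠ h^t_{H2,i2}. -/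
lemma uniFeat_eq_imp_gwlLabel_eq {X : Type}
    (φ1 : ℕ → Multiset X → X) (φ2 : ℕ → X → Multiset X → X) (c : X)
    (hφ1 : ∀ t, Function.Injective (φ1 t))
    (hφ2 : ∀ t, Function.Injective (fun p : X × Multiset X => φ2 t p.1 p.2)) :
    ∀ t, ∀ {V1 V2 : Type} [DecidableEq V1] [DecidableEq V2]
      (H1 : FinHypergraph V1) (H2 : FinHypergraph V2) (i1 : V1) (i2 : V2),
      uniFeat φ1 φ2 c H1 t i1 = uniFeat φ1 φ2 c H2 t i2 →
      gwlLabel H1 t i1 = gwlLabel H2 t i2 := by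
  intro t
  induction t with
  | zero => intros; rfl
  | succ t ih =>
    intro V1 V2 _ _ H1 H2 i1 i2 h
    simp only [uniFeat, gwlLabel] at h ⊢
    have hpair : ((uniFeat φ1 φ2 c H1 t i1,
        (H1.incident i1).val.map fun e => φ1 t (e.val.map (uniFeat φ1 φ2 c H1 t))) :
          X × Multiset X)
        = (uniFeat φ1 φ2 c H2 t i2,
        (H2.incident i2).val.map fun e => φ1 t (e.val.map (uniFeat φ1 φ2 c H2 t))) :=
      hφ2 t h
    obtain ⟨ha, hm⟩ := Prod.mk.injEq .. ▸ hpair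
    have hlab : gwlLabel H1 t i1 = gwlLabel H2 t i2 := ih H1 H2 i1 i2 ha
    rw [← Multiset.rel_eq, Multiset.rel_map] at hm
    change (_ : Multiset (LabelType t × Multiset (LabelType t))) = _
    rw [← Multiset.rel_eq, Multiset.rel_map]
    refine hm.mono fun e1 _ e2 _ hfe => ?_
    have he : e1.val.map (uniFeat φ1 φ2 c H1 t) = e2.val.map (uniFeat φ1 φ2 c H2 t) :=
      hφ1 t hfe
    rw [← Multiset.rel_eq, Multiset.rel_map] at he
    have : e1.val.map (gwlLabel H1 t) = e2.val.map (gwlLabel H2 t) := by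
      rw [← Multiset.rel_eq, Multiset.rel_map]
      exact he.mono fun j1 _ j2 _ hj => ih H1 H2 j1 j2 hj
    exact Prod.ext hlab this

/-- **Corollary 1 (vertex-level).** If all first-stage aggregations `φ1^t` and all
second-stage aggregations `φ2^t` of a message-passing UniGNN are injective, and the
1-GWL test distinguishes the local substructures rooted at vertices `i1` of `H1` and
`i2` of `H2` at depth `t` (i.e. `l^t_{H1,i1} ≠ l^t_{H2,i2}`), then the UniGNN also
distinguishes them: `h^t_{H1,i1} ≠ h^t_{H2,i2}`. -/
theorem uniGNN_distinguishes_local_substructures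
    {X : Type} (φ1 : ℕ → Multiset X → X) (φ2 : ℕ → X → Multiset X → X) (c : X)
    (hφ1 : ∀ t, Function.Injective (φ1 t))
    (hφ2 : ∀ t, Function.Injective (fun p : X × Multiset X => φ2 t p.1 p.2))
    {V1 V2 : Type} [DecidableEq V1] [Fintype V1] [DecidableEq V2] [Fintype V2]
    (H1 : FinHypergraph V1) (H2 : FinHypergraph V2) (t : ℕ) (i1 : V1) (i2 : V2)
    (hl : gwlLabel H1 t i1 ≠ gwlLabel H2 t i2) :
    uniFeat φ1 φ2 c H1 t i1 ≠ uniFeat φ1 φ2 c H2 t i2 :=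
  fun h => hl (uniFeat_eq_imp_gwlLabel_eq φ1 φ2 c hφ1 hφ2 t H1 H2 i1 i2 h)
end
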